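/- For a bounded operator T on a separable Hilbert space H, the following are equivalent: (1) T is diskcyclic; (2) T is disk transitive; (3) for each x, y ∈ H there exist sequences {x_k} in H, {n_k} in ℕ, and {α_k} in ℂ with 0 < |α_k| ≤ 1 such that x_k → x and α_k T^{n_k} x_k → y. -/

import Mathlib

open Filter Topology Pointwise

/-- The disk orbit of `x` under `T`: `{α • Tⁿ x : n ≥ 0, α ∈ ℂ, |α| ≤ 1}`. -/
def diskOrbit {H : Type*} [NormedAddCommGroup H] [NormedSpace ℂ H]
    (T : H →L[ℂ] H) (x : H) : Set H :=
  {y | ∃ (n : ℕ) (α : ℂ), ‖α‖ ≤ 1 ∧ y = α • (T ^ n) x}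

/-- An operator is diskcyclic if some vector has dense disk orbit. -/
def DiskCyclic {H : Type*} [NormedAddCommGroup H] [NormedSpace ℂ H]
    (T : H →L[ℂ] H) : Prop :=
  ∃ x : H, Dense (diskOrbit T x)

/-- `T` is disk transitive if for all nonempty open `U V`, some `Tⁿ(αU)` meets `V`
with `0 < |α| ≤ 1`. -/
def DiskTransitive {H : Type*} [NormedAddCommGroup H] [NormedSpace ℂ H]
    (T : H →L[ℂ] H) : Prop :=
  ∀ U V : Set H, IsOpen U → IsOpen V → U.Nonempty → V.Nonempty →
    ∃ (α : ℂ) (n : ℕ), 0 < ‖α‖ ∧ ‖α‖ ≤ 1 ∧ ((T ^ n) '' (α • U) ∩ V).Nonempty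

section Aux

variable {H : Type*} [NormedAddCommGroup H] [NormedSpace ℂ H]

/-- The closed disk through `w`. -/
def myDisk (w : H) : Set H := (fun α : ℂ => α • w) '' Metric.closedBall 0 1

lemma myDisk_isClosed (w : H) : IsClosed (myDisk w) :=
  ((isCompact_closedBall (0:ℂ) 1).image (continuous_id.smul continuous_const)).isClosed

lemma mem_myDisk {w y : H} {α : ℂ} (hα : ‖α‖ ≤ 1) (hy : y = α • w) : y ∈ myDisk w :=
  ⟨α, by simpa [Metric.mem_closedBall, dist_zero_right] using hα, hy.symm⟩

lemma dense_diff_of_closed {X : Type*} [TopologicalSpace X] {D C : Set X}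
    (hD : Dense D) (hC : IsClosed C) (hCi : interior C = ∅) : Dense (D \ C) := by
  rw [dense_iff_inter_open] at hD ⊢
  intro U hU hUne
  have hUC : (U \ C).Nonempty := by
    rcases Set.eq_empty_or_nonempty (U \ C) with h | h
    · exfalso
      have hsub : U ⊆ C := by
        intro x hx
        by_contra hxc
        exact (Set.eq_empty_iff_forall_notMem.1 h x) ⟨hx, hxc⟩
      have : U ⊆ interior C := hU.subset_interior_iff.2 hsub
      rw [hCi] at this
      exact hUne.ne_empty (Set.subset_empty_iff.1 this)
    · exact h
  obtain ⟨y, hy⟩ := hD (U \ C) (hU.sdiff hC) hUC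
  exact ⟨y, hy.1.1, hy.2, hy.1.2⟩

/-- The part of the disk orbit with index `≥ N` and nonzero scalar. -/
def tailOrbit (T : H →L[ℂ] H) (z : H) (N : ℕ) : Set H :=
  {y | ∃ n, N ≤ n ∧ ∃ α : ℂ, 0 < ‖α‖ ∧ ‖α‖ ≤ 1 ∧ y = α • (T ^ n) z}

lemma dense_tailOrbit (T : H →L[ℂ] H) {z : H} (hz : Dense (diskOrbit T z))
    (hP : ∀ w : H, interior (myDisk w) = ∅) (N : ℕ) : Dense (tailOrbit T z N) := by
  have key : ∀ M : ℕ, Dense (diskOrbit T z \ ⋃ m ∈ Finset.range M, myDisk ((T ^ m) z)) := by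
    intro M
    induction M with
    | zero => simpa using hz
    | succ M ih =>
        have : (⋃ m ∈ Finset.range (M+1), myDisk ((T ^ m) z)) =
            (⋃ m ∈ Finset.range M, myDisk ((T ^ m) z)) ∪ myDisk ((T ^ M) z) := by
          rw [Finset.range_add_one]
          simp [Set.biUnion_insert, Set.union_comm]
        rw [this, ← Set.diff_diff]
        exact dense_diff_of_closed ih (myDisk_isClosed _) (hP _)
  refine (key (N+1)).mono ?_
  rintro y ⟨⟨n, α, hα, rfl⟩, hy2⟩
  have hmem : ∀ m, m < N + 1 → α • (T ^ n) z ∉ myDisk ((T ^ m) z) := by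
    intro m hm hmem
    exact hy2 (Set.mem_biUnion (Finset.mem_range.2 hm) hmem)
  have hα0 : α ≠ 0 := by
    rintro rfl
    exact hmem 0 (Nat.succ_pos N) (mem_myDisk (α := 0) (by norm_num) (by simp))
  have hn : N < n := by
    by_contra h
    push_neg at h
    exact hmem n (Nat.lt_succ_of_le h) (mem_myDisk hα rfl)
  exact ⟨n, hn.le, α, norm_pos_iff.2 hα0, hα, rfl⟩

lemma pow_mul_apply (T : H →L[ℂ] H) (m n : ℕ) (x : H) :
    (T ^ (m + n)) x = (T ^ m) ((T ^ n) x) := by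
  rw [pow_add]; rfl

lemma trans_of_cyclic (T : H →L[ℂ] H) (hT : DiskCyclic T) : DiskTransitive T := by
  obtain ⟨z, hz⟩ := hT
  by_cases hP : ∀ w : H, interior (myDisk w) = ∅
  · -- "big" case: every disk is nowhere dense
    intro U V hU hV hUne hVne
    obtain ⟨u, hu, huU⟩ := (dense_tailOrbit T hz hP 0).exists_mem_open hU hUne
    obtain ⟨n₁, -, α₁, hα₁pos, hα₁le, hu_eq⟩ := hu
    have hα₁ : α₁ ≠ 0 := norm_pos_iff.1 hα₁pos
    -- pull back V along multiplication by α₁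
    have hpre : IsOpen ((fun y : H => α₁ • y) ⁻¹' V) :=
      hV.preimage (continuous_const.smul continuous_id)
    have hprene : ((fun y : H => α₁ • y) ⁻¹' V).Nonempty := by
      obtain ⟨v₀, hv₀⟩ := hVne
      exact ⟨α₁⁻¹ • v₀, by simp [Set.mem_preimage, smul_smul, mul_inv_cancel₀ hα₁, hv₀]⟩
    obtain ⟨v', hv', hv'pre⟩ := (dense_tailOrbit T hz hP n₁).exists_mem_open hpre hprene
    obtain ⟨n₂, hn₂, α₂, hα₂pos, hα₂le, hv'_eq⟩ := hv'
    refine ⟨α₂, n₂ - n₁, hα₂pos, hα₂le, ⟨α₁ • v', ?_, hv'pre⟩⟩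
    refine ⟨α₂ • u, Set.smul_mem_smul_set huU, ?_⟩
    rw [hu_eq, hv'_eq]
    rw [smul_smul, smul_smul, map_smul, ← pow_mul_apply T (n₂ - n₁) n₁, Nat.sub_add_cancel hn₂,
      mul_comm]
  · -- small case: some disk has nonempty interior, so H is at most 1-dimensional
    push_neg at hP
    obtain ⟨w, hw⟩ := hP
    have hspan : Submodule.span ℂ {w} = ⊤ := by
      apply Submodule.eq_top_of_nonempty_interior'
      obtain ⟨y, hy⟩ := hw
      refine ⟨y, ?_⟩
      have : y ∈ myDisk w := interior_subset hy
      obtain ⟨α, -, rfl⟩ := this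
      have hmem : α • w ∈ Submodule.span ℂ {w} :=
        Submodule.smul_mem _ _ (Submodule.mem_span_singleton_self w)
      exact mem_interior.2 ⟨interior (myDisk w), fun p hp => by
        obtain ⟨β, -, rfl⟩ := interior_subset hp
        exact Submodule.smul_mem _ _ (Submodule.mem_span_singleton_self w),
        isOpen_interior, hy⟩
    have hrep : ∀ x : H, ∃ c : ℂ, c • w = x := by
      intro x
      have : x ∈ Submodule.span ℂ {w} := hspan ▸ Submodule.mem_top
      exact Submodule.mem_span_singleton.1 this
    by_cases hw0 : w = 0
    · -- H is trivial
      have hx0 : ∀ x : H, x = 0 := by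
        intro x
        obtain ⟨c, hc⟩ := hrep x
        rw [← hc, hw0, smul_zero]
      intro U V hU hV ⟨u, huU⟩ ⟨v, hvV⟩
      refine ⟨1, 0, by norm_num, by norm_num, ⟨u, ⟨(1:ℂ) • u, Set.smul_mem_smul_set huU, by
        rw [pow_zero, one_smul]; rfl⟩, by rw [hx0 u, ← hx0 v]; exact hvV⟩⟩
    · -- H is one-dimensional, spanned by w ≠ 0
      obtain ⟨lam, hlam⟩ := hrep (T w)
      have hpow : ∀ (n : ℕ) (c : ℂ), (T ^ n) (c • w) = (c * lam ^ n) • w := by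
        intro n
        induction n with
        | zero => intro c; simp
        | succ n ih =>
            intro c
            rw [pow_succ, ContinuousLinearMap.mul_apply, map_smul, ← hlam, smul_smul, ih,
              pow_succ]
            ring_nf
      have hwnorm : 0 < ‖w‖ := norm_pos_iff.2 hw0
      -- |lam| > 1
      obtain ⟨c₀, hc₀⟩ := hrep z
      have hlam1 : 1 < ‖lam‖ := by
        by_contra h
        push_neg at h
        have horb : diskOrbit T z ⊆ Metric.closedBall 0 (‖c₀‖ * ‖w‖) := by
          rintro y ⟨n, α, hα, rfl⟩
          rw [← hc₀, hpow, Metric.mem_closedBall, dist_zero_right, smul_smul, norm_smul,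
            norm_mul, norm_mul, norm_pow]
          have h1 : ‖lam‖ ^ n ≤ 1 := pow_le_one₀ (norm_nonneg _) h
          calc ‖α‖ * (‖c₀‖ * ‖lam‖ ^ n) * ‖w‖
              ≤ 1 * (‖c₀‖ * 1) * ‖w‖ := by
                apply mul_le_mul_of_nonneg_right _ (norm_nonneg w)
                exact mul_le_mul hα (mul_le_mul_of_nonneg_left h1 (norm_nonneg _))
                  (by positivity) zero_le_one
            _ = ‖c₀‖ * ‖w‖ := by ring
        have hcl : (Set.univ : Set H) ⊆ Metric.closedBall 0 (‖c₀‖ * ‖w‖) := by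
          have := hz.closure_eq
          calc (Set.univ : Set H) = closure (diskOrbit T z) := this.symm
            _ ⊆ Metric.closedBall 0 (‖c₀‖ * ‖w‖) := Metric.isClosed_closedBall.closure_subset_iff.2 horb
        have hbad := hcl (Set.mem_univ ((((‖c₀‖ * ‖w‖ + 1) / ‖w‖ : ℝ) : ℂ) • w))
        rw [Metric.mem_closedBall, dist_zero_right, norm_smul, Complex.norm_real,
          Real.norm_eq_abs, abs_of_nonneg (by positivity), div_mul_cancel₀ _ hwnorm.ne'] at hbad
        linarith
      have hlam0 : lam ≠ 0 := by
        intro h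
        rw [h, norm_zero] at hlam1
        linarith
      -- nonzero elements of open sets
      have hnonzero : ∀ (U : Set H), IsOpen U → U.Nonempty → ∃ u ∈ U, u ≠ 0 := by
        intro U hU ⟨u₀, hu₀⟩
        by_cases h : u₀ = 0
        · obtain ⟨ε, hε, hball⟩ := Metric.isOpen_iff.1 hU u₀ hu₀
          refine ⟨((ε / (2 * ‖w‖) : ℝ) : ℂ) • w, hball ?_, ?_⟩
          · rw [Metric.mem_ball, h, dist_zero_right, norm_smul, Complex.norm_real,
              Real.norm_eq_abs, abs_of_nonneg (by positivity)]
            have heq : ε / (2 * ‖w‖) * ‖w‖ = ε / 2 := by field_simp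
            rw [heq]; linarith
          · intro hcon
            have := congrArg norm hcon
            rw [norm_smul, Complex.norm_real, Real.norm_eq_abs,
              abs_of_nonneg (by positivity), norm_zero] at this
            have : ε / (2 * ‖w‖) * ‖w‖ > 0 := by positivity
            linarith
        · exact ⟨u₀, hu₀, h⟩
      intro U V hU hV hUne hVne
      obtain ⟨u, huU, hu0⟩ := hnonzero U hU hUne
      obtain ⟨v, hvV, hv0⟩ := hnonzero V hV hVne
      obtain ⟨c, hc⟩ := hrep u
      obtain ⟨d, hd⟩ := hrep v
      have hc0 : c ≠ 0 := by rintro rfl; rw [zero_smul] at hc; exact hu0 hc.symm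
      have hd0 : d ≠ 0 := by rintro rfl; rw [zero_smul] at hd; exact hv0 hd.symm
      obtain ⟨n, hn⟩ := pow_unbounded_of_one_lt (‖d‖ / ‖c‖) hlam1
      set α : ℂ := d / (c * lam ^ n) with hα_def
      have hden : c * lam ^ n ≠ 0 := mul_ne_zero hc0 (pow_ne_zero n hlam0)
      have hα0 : α ≠ 0 := div_ne_zero hd0 hden
      have hαle : ‖α‖ ≤ 1 := by
        rw [hα_def, norm_div, div_le_one (norm_pos_iff.2 hden), norm_mul, norm_pow]
        have hcpos : 0 < ‖c‖ := norm_pos_iff.2 hc0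
        rw [div_lt_iff₀ hcpos] at hn
        nlinarith
      refine ⟨α, n, norm_pos_iff.2 hα0, hαle, ⟨v, ⟨α • u, Set.smul_mem_smul_set huU, ?_⟩, hvV⟩⟩
      rw [← hc, smul_smul, hpow, ← hd]
      congr 1
      rw [hα_def]
      field_simp

end Aux

section Main

variable {H : Type*} [NormedAddCommGroup H] [InnerProductSpace ℂ H] [CompleteSpace H]
  [TopologicalSpace.SeparableSpace H]

lemma cyclic_of_trans (T : H →L[ℂ] H) (hT : DiskTransitive T) : DiskCyclic T := by
  obtain ⟨B, hBc, hBne, hBb⟩ := TopologicalSpace.exists_countable_basis H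
  set G : Set H → Set H := fun s =>
    ⋃ (n : ℕ), ⋃ (α : ℂ), ⋃ (_ : 0 < ‖α‖ ∧ ‖α‖ ≤ 1), (fun x => α • (T ^ n) x) ⁻¹' s with hG
  have hGopen : ∀ s ∈ B, IsOpen (G s) := by
    intro s hs
    refine isOpen_iUnion fun n => isOpen_iUnion fun α => isOpen_iUnion fun _ => ?_
    exact (hBb.isOpen hs).preimage ((T ^ n).continuous.const_smul α)
  have hGdense : ∀ s ∈ B, Dense (G s) := by
    intro s hs
    rw [dense_iff_inter_open]
    intro W hW hWne
    have hsne : s.Nonempty := Set.nonempty_iff_ne_empty.2 (fun h => hBne (h ▸ hs))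
    obtain ⟨α, n, hαpos, hαle, y, ⟨p, hp, rfl⟩, hys⟩ :=
      hT W s hW (hBb.isOpen hs) hWne hsne
    obtain ⟨u, huW, rfl⟩ := hp
    refine ⟨u, huW, ?_⟩
    simp only [hG, Set.mem_iUnion, Set.mem_preimage]
    exact ⟨n, α, ⟨hαpos, hαle⟩, by rwa [← map_smul]⟩
  have hdense : Dense (⋂ s ∈ B, G s) := dense_biInter_of_isOpen hGopen hBc hGdense
  obtain ⟨x, hx⟩ := hdense.nonempty
  refine ⟨x, ?_⟩
  rw [hBb.dense_iff]
  intro o ho hone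
  have hxo : x ∈ G o := by
    simp only [Set.mem_iInter] at hx
    exact hx o ho
  simp only [hG, Set.mem_iUnion, Set.mem_preimage] at hxo
  obtain ⟨n, α, ⟨-, hαle⟩, hmem⟩ := hxo
  exact ⟨α • (T ^ n) x, hmem, n, α, hαle, rfl⟩

omit [CompleteSpace H] [TopologicalSpace.SeparableSpace H] in
lemma three_of_trans (T : H →L[ℂ] H) (hT : DiskTransitive T) :
    ∀ x y : H, ∃ (xs : ℕ → H) (ns : ℕ → ℕ) (as : ℕ → ℂ),
      (∀ k, 0 < ‖as k‖ ∧ ‖as k‖ ≤ 1) ∧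
      Filter.Tendsto xs Filter.atTop (nhds x) ∧
      Filter.Tendsto (fun k => as k • (T ^ ns k) (xs k)) Filter.atTop (nhds y) := by
  intro x y
  have key : ∀ k : ℕ, ∃ (u : H) (n : ℕ) (α : ℂ), 0 < ‖α‖ ∧ ‖α‖ ≤ 1 ∧
      u ∈ Metric.ball x (1 / (k + 1)) ∧ α • (T ^ n) u ∈ Metric.ball y (1 / (k + 1)) := by
    intro k
    have hpos : (0:ℝ) < 1 / (k + 1) := by positivity
    obtain ⟨α, n, hαpos, hαle, p, ⟨q, hq, rfl⟩, hpV⟩ :=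
      hT (Metric.ball x (1 / (k + 1))) (Metric.ball y (1 / (k + 1)))
        Metric.isOpen_ball Metric.isOpen_ball
        ⟨x, Metric.mem_ball_self hpos⟩ ⟨y, Metric.mem_ball_self hpos⟩
    obtain ⟨u, hu, rfl⟩ := hq
    exact ⟨u, n, α, hαpos, hαle, hu, by simpa [map_smul] using hpV⟩
  choose xs ns as h1 h2 h3 h4 using key
  refine ⟨xs, ns, as, fun k => ⟨h1 k, h2 k⟩, ?_, ?_⟩
  · rw [tendsto_iff_dist_tendsto_zero]
    refine squeeze_zero (fun k => dist_nonneg) (fun k => (h3 k).le) ?_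
    exact_mod_cast tendsto_one_div_add_atTop_nhds_zero_nat (𝕜 := ℝ)
  · rw [tendsto_iff_dist_tendsto_zero]
    refine squeeze_zero (fun k => dist_nonneg) (fun k => (h4 k).le) ?_
    exact_mod_cast tendsto_one_div_add_atTop_nhds_zero_nat (𝕜 := ℝ)

omit [CompleteSpace H] [TopologicalSpace.SeparableSpace H] in
lemma trans_of_three (T : H →L[ℂ] H)
    (h : ∀ x y : H, ∃ (xs : ℕ → H) (ns : ℕ → ℕ) (as : ℕ → ℂ),
      (∀ k, 0 < ‖as k‖ ∧ ‖as k‖ ≤ 1) ∧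
      Filter.Tendsto xs Filter.atTop (nhds x) ∧
      Filter.Tendsto (fun k => as k • (T ^ ns k) (xs k)) Filter.atTop (nhds y)) :
    DiskTransitive T := by
  intro U V hU hV ⟨x, hxU⟩ ⟨y, hyV⟩
  obtain ⟨xs, ns, as, hαs, hx, hy⟩ := h x y
  have h1 : ∀ᶠ k in atTop, xs k ∈ U := hx (hU.mem_nhds hxU)
  have h2 : ∀ᶠ k in atTop, as k • (T ^ ns k) (xs k) ∈ V := hy (hV.mem_nhds hyV)
  obtain ⟨k, hk1, hk2⟩ := (h1.and h2).exists
  exact ⟨as k, ns k, (hαs k).1, (hαs k).2,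
    ⟨as k • (T ^ ns k) (xs k), ⟨as k • xs k, Set.smul_mem_smul_set hk1, by rw [map_smul]⟩, hk2⟩⟩

end Main

theorem stmt8 {H : Type*} [NormedAddCommGroup H] [InnerProductSpace ℂ H] [CompleteSpace H]
    [TopologicalSpace.SeparableSpace H]
    (T : H →L[ℂ] H) :
    (DiskCyclic T ↔ DiskTransitive T) ∧
      (DiskTransitive T ↔
        ∀ x y : H, ∃ (xs : ℕ → H) (ns : ℕ → ℕ) (as : ℕ → ℂ),
          (∀ k, 0 < ‖as k‖ ∧ ‖as k‖ ≤ 1) ∧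
          Filter.Tendsto xs Filter.atTop (nhds x) ∧
          Filter.Tendsto (fun k => as k • (T ^ ns k) (xs k)) Filter.atTop (nhds y)) := by
  exact ⟨⟨trans_of_cyclic T, cyclic_of_trans T⟩, ⟨three_of_trans T, trans_of_three T⟩⟩
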